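/- Let m ≥ 1 be odd, let k ≥ 1, let t : ℤ/2^k → Aut(ℤ/m) be a group homomorphism, and let G = ℤ/m ⋊_t ℤ/2^k be the corresponding semidirect product (a 2-hyperelementary periodic group of type I). Then G has a non-central element of order two if and only if t is injective (i.e., ker t = {1}). -/

import Mathlib

/-- In `ZMod (2^k)` with `k ≥ 1`, an element of additive order two has value `2^(k-1)`. -/
lemma zmod_two_pow_self_add_self_val (k : ℕ) (hk : 1 ≤ k) (x : ZMod (2 ^ k))
    (hx : x + x = 0) (hx0 : x ≠ 0) : x.val = 2 ^ (k - 1) := by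
  haveI : NeZero (2 ^ k) := ⟨pow_ne_zero _ two_ne_zero⟩
  have hcast : ((x.val + x.val : ℕ) : ZMod (2 ^ k)) = 0 := by
    push_cast [ZMod.natCast_zmod_val]; exact hx
  have hdvd : 2 ^ k ∣ x.val + x.val := (ZMod.natCast_eq_zero_iff _ _).mp hcast
  have hk' : 2 ^ k = 2 * 2 ^ (k - 1) := by
    rw [← pow_succ']
    congr 1
    omega
  have hdvd' : 2 ^ (k - 1) ∣ x.val := by
    have : 2 * 2 ^ (k - 1) ∣ 2 * x.val := by
      rw [← hk']; simpa [two_mul] using hdvd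
    exact (mul_dvd_mul_iff_left (two_ne_zero)).mp this
  have hlt : x.val < 2 ^ k := ZMod.val_lt x
  have hne : x.val ≠ 0 := fun h => hx0 (by
    have := ZMod.natCast_zmod_val x
    rw [h] at this; simpa using this.symm)
  obtain ⟨c, hc⟩ := hdvd'
  have hcpos : 1 ≤ c := by
    rcases Nat.eq_zero_or_pos c with h | h
    · exact absurd (by simp [hc, h]) hne
    · exact h
  have hclt : c < 2 := by
    by_contra h
    push_neg at h
    have : 2 ^ k ≤ x.val := by
      calc 2 ^ k = 2 ^ (k - 1) * 2 := by rw [hk']; ring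
        _ ≤ 2 ^ (k - 1) * c := Nat.mul_le_mul_left _ h
        _ = x.val := hc.symm
    omega
  have : c = 1 := by omega
  simp [hc, this]

/-- Uniqueness of the element of additive order two in `ZMod (2^k)`. -/
lemma zmod_two_pow_order_two_unique (k : ℕ) (hk : 1 ≤ k) (x y : ZMod (2 ^ k))
    (hx : x + x = 0) (hx0 : x ≠ 0) (hy : y + y = 0) (hy0 : y ≠ 0) : x = y := by
  haveI : NeZero (2 ^ k) := ⟨pow_ne_zero _ two_ne_zero⟩
  apply ZMod.val_injective
  rw [zmod_two_pow_self_add_self_val k hk x hx hx0,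
    zmod_two_pow_self_add_self_val k hk y hy hy0]

/-- In `ZMod m` with `m` odd, `a + a = 0` forces `a = 0`. -/
lemma zmod_odd_add_self (m : ℕ) (hm : Odd m) (a : ZMod m) (h : a + a = 0) : a = 0 := by
  have h2 : IsUnit (2 : ZMod m) := by
    have : IsUnit ((2 : ℕ) : ZMod m) := by
      rw [ZMod.isUnit_iff_coprime]
      rw [Nat.Prime.coprime_iff_not_dvd Nat.prime_two]
      have := Nat.odd_iff.mp hm
      omega
    simpa using this
  have h' : (2 : ZMod m) * a = 0 := by rw [two_mul]; exact h
  exact (h2.mul_right_eq_zero).mp h'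

/-- A 2-hyperelementary periodic group of type I, i.e. a semidirect product
`G = ℤ/m ⋊_t ℤ/2^k` with `m` odd, has a non-central element of order two if and only
if the twisting homomorphism `t` is injective (i.e. `ker t = {1}`). -/
theorem noncentral_involution_iff_twist_injective
    (m k : ℕ) (hm : Odd m) (hk : 1 ≤ k)
    (t : Multiplicative (ZMod (2 ^ k)) →* MulAut (Multiplicative (ZMod m))) :
    (∃ g : Multiplicative (ZMod m) ⋊[t] Multiplicative (ZMod (2 ^ k)),
        g ∉ Subgroup.center (Multiplicative (ZMod m) ⋊[t] Multiplicative (ZMod (2 ^ k))) ∧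
        orderOf g = 2) ↔
      Function.Injective t := by
  haveI : NeZero (2 ^ k) := ⟨pow_ne_zero _ two_ne_zero⟩
  haveI : Fact (Nat.Prime 2) := ⟨Nat.prime_two⟩
  constructor
  · rintro ⟨g, hgc, hg2⟩
    have hsq : g * g = 1 := by
      have := pow_orderOf_eq_one g
      rwa [hg2, sq] at this
    have hne : g ≠ 1 := by
      intro h; rw [h, orderOf_one] at hg2; omega
    have hb2 : g.right * g.right = 1 := by
      have := congrArg SemidirectProduct.right hsq
      simpa using this
    have ha : g.left * t g.right g.left = 1 := by
      have := congrArg SemidirectProduct.left hsq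
      simpa using this
    -- The action of `g.right` is nontrivial, else `g` would be central.
    have htr : t g.right ≠ 1 := by
      intro htriv
      have hl1 : g.left = 1 := by
        have : g.left * g.left = 1 := by rwa [htriv] at ha
        have h' : Multiplicative.toAdd g.left + Multiplicative.toAdd g.left = 0 := this
        have := zmod_odd_add_self m hm _ h'
        exact Multiplicative.toAdd.injective this
      apply hgc
      rw [Subgroup.mem_center_iff]
      intro h
      ext
      · simp [hl1, htriv]
      · simp [mul_comm]
    -- `g.right` has order two.
    have hbne : g.right ≠ 1 := by
      intro h; exact htr (by rw [h, map_one])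
    -- injectivity
    rw [injective_iff_map_eq_one]
    intro z hz
    by_contra hz1
    have hdvd : orderOf z ∣ 2 ^ k := by
      have h1 : orderOf z ∣ Fintype.card (Multiplicative (ZMod (2 ^ k))) := orderOf_dvd_card
      simpa [ZMod.card] using h1
    obtain ⟨j, hjk, hje⟩ := (Nat.dvd_prime_pow Nat.prime_two).mp hdvd
    have hj1 : 1 ≤ j := by
      rcases Nat.eq_zero_or_pos j with h | h
      · rw [h, pow_zero] at hje
        exact absurd (orderOf_eq_one_iff.mp hje) hz1
      · exact h
    set w := z ^ (2 ^ (j - 1)) with hw_def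
    have hgcd : Nat.gcd (2 ^ j) (2 ^ (j - 1)) = 2 ^ (j - 1) :=
      Nat.gcd_eq_right (pow_dvd_pow 2 (by omega))
    have hw : orderOf w = 2 := by
      rw [hw_def, orderOf_pow, hje, hgcd]
      rw [show (2 : ℕ) ^ j = 2 ^ (j - 1) * 2 by rw [← pow_succ]; congr 1; omega]
      rw [Nat.mul_div_cancel_left _ (Nat.pow_pos (by omega))]
    have htw : t w = 1 := by rw [hw_def, map_pow, hz, one_pow]
    have hwsq : w * w = 1 := by
      have := pow_orderOf_eq_one w
      rwa [hw, sq] at this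
    have hwne : w ≠ 1 := by
      intro h; rw [h, orderOf_one] at hw; omega
    have hweq : w = g.right := by
      apply Multiplicative.toAdd.injective
      exact zmod_two_pow_order_two_unique k hk _ _ hwsq
        (fun h => hwne (Multiplicative.toAdd.injective h)) hb2
        (fun h => hbne (Multiplicative.toAdd.injective h))
    exact htr (hweq ▸ htw)
  · intro hinj
    set b₀ : Multiplicative (ZMod (2 ^ k)) :=
      Multiplicative.ofAdd (((2 ^ (k - 1) : ℕ) : ZMod (2 ^ k))) with hb₀_def
    have hb0ne : b₀ ≠ 1 := by
      rw [hb₀_def]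
      intro h
      have h0 : ((2 ^ (k - 1) : ℕ) : ZMod (2 ^ k)) = 0 := h
      rw [ZMod.natCast_eq_zero_iff] at h0
      have hlt : 2 ^ (k - 1) < 2 ^ k := Nat.pow_lt_pow_right (by omega) (by omega)
      have := Nat.le_of_dvd (Nat.pow_pos (by omega)) h0
      omega
    have hb0sq : b₀ * b₀ = 1 := by
      rw [hb₀_def, ← ofAdd_add]
      have : ((2 ^ (k - 1) : ℕ) : ZMod (2 ^ k)) + ((2 ^ (k - 1) : ℕ) : ZMod (2 ^ k)) = 0 := by
        rw [← Nat.cast_add]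
        rw [show 2 ^ (k - 1) + 2 ^ (k - 1) = 2 ^ k by
          rw [← two_mul, ← pow_succ']; congr 1; omega]
        exact ZMod.natCast_self _
      rw [this]
      rfl
    have htb : t b₀ ≠ 1 := fun h => hb0ne (hinj (h.trans (map_one t).symm))
    obtain ⟨x, hx⟩ : ∃ x, t b₀ x ≠ x := by
      by_contra hall
      push_neg at hall
      exact htb (MulEquiv.ext fun x => by simp [hall x])
    refine ⟨⟨1, b₀⟩, ?_, ?_⟩
    · intro hcen
      have hcomm := (Subgroup.mem_center_iff.mp hcen) ⟨x, 1⟩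
      have hleft := congrArg SemidirectProduct.left hcomm
      simp at hleft
      exact hx hleft.symm
    · apply orderOf_eq_prime
      · rw [sq]
        ext
        · simp
        · simp [hb0sq]
      · intro h
        have := congrArg SemidirectProduct.right h
        simpa using hb0ne this
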